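/- For all natural numbers n ≥ 1 and k with 1 ≤ k ≤ n, the binomial coefficients satisfy C(n,k)·C(n+1,k-1)·C(n+2,k+1) = C(n,k-1)·C(n+1,k+1)·C(n+2,k) (the Star of David rule). -/

import Mathlib

theorem star_of_david_rule (n k : ℕ) (hn : 1 ≤ n) (hk1 : 1 ≤ k) (hkn : k ≤ n) :
    Nat.choose n k * Nat.choose (n+1) (k-1) * Nat.choose (n+2) (k+1) =
    Nat.choose n (k-1) * Nat.choose (n+1) (k+1) * Nat.choose (n+2) k := by
  obtain ⟨m, rfl⟩ : ∃ m, k = m + 1 := ⟨k - 1, by omega⟩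
  obtain ⟨j, rfl⟩ : ∃ j, n = m + 1 + j := ⟨n - (m+1), by omega⟩
  have h : ∀ a b : ℕ, b ≤ a → (a.choose b : ℚ) = (a.factorial : ℚ) / (b.factorial * (a - b).factorial) :=
    fun a b hb => Nat.cast_choose ℚ hb
  have key : ((m+1+j).choose (m+1) * (m+1+j+1).choose (m+1-1) *
      (m+1+j+2).choose (m+1+1) : ℚ) =
      ((m+1+j).choose (m+1-1) * (m+1+j+1).choose (m+1+1) *
      (m+1+j+2).choose (m+1) : ℚ) := by
    rw [h _ _ (by omega), h _ _ (by omega), h _ _ (by omega),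
        h _ _ (by omega), h _ _ (by omega), h _ _ (by omega)]
    rw [show m+1-1 = m from by omega, show m+1+j-(m+1) = j from by omega,
        show m+1+j-m = j+1 from by omega, show m+1+j+1-m = j+2 from by omega,
        show m+1+j+1-(m+1+1) = j from by omega,
        show m+1+j+2-(m+1+1) = j+1 from by omega,
        show m+1+j+2-(m+1) = j+2 from by omega]
    have := Nat.factorial_pos
    field_simp
  exact_mod_cast key
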